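/- If B is the base of a ∪-closed family containing ∅, and K_0 = ∅, K_1, ..., K_n = K is a tight path in F, then for any L in B the sequence obtained from ∅ ∪ L = L, K_1 ∪ L, ..., K_n ∪ L = K ∪ L by removing consecutive duplicates is a tight path in F from L to K ∪ L. -/

import Mathlib

open Finset

variable {α : Type*} [DecidableEq α]

/-- The span of a family `G`: all unions of nonempty subfamilies of `G`. -/
def Span (G : Finset (Finset α)) : Finset (Finset α) :=
  (G.powerset.filter Finset.Nonempty).image fun H => H.sup id

/-- A family is ∪-closed if it contains the union of each of its nonempty subfamilies. -/
def UnionClosed (F : Finset (Finset α)) : Prop :=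
  ∀ H ⊆ F, H.Nonempty → H.sup id ∈ F

/-- `p` is a tight path from `P` to `Q` inside the family `F`. -/
def IsTightPath (F : Finset (Finset α)) (P Q : Finset α) (p : List (Finset α)) : Prop :=
  p.head? = some P ∧ p.getLast? = some Q ∧
  p.length = (symmDiff P Q).card + 1 ∧
  (∀ S ∈ p, S ∈ F) ∧
  List.Chain' (fun A B => (symmDiff A B).card = 1) p

/-- A family is well-graded if any two distinct members are joined by a tight path. -/
def WellGraded (F : Finset (Finset α)) : Prop :=
  ∀ P ∈ F, ∀ Q ∈ F, P ≠ Q → ∃ p, IsTightPath F P Q p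

/-- `B` is a base of `F`: a minimal subfamily of `F` spanning `F`. -/
def IsBase (B F : Finset (Finset α)) : Prop :=
  B ⊆ F ∧ Span B = F ∧ ∀ H ⊆ B, Span H = F → H = B

/-- `A` is an atom of `F` at `x`: an inclusion-minimal member of `F` containing `x`. -/
def IsAtomAt (F : Finset (Finset α)) (x : α) (A : Finset α) : Prop :=
  A ∈ F ∧ x ∈ A ∧ ∀ B ∈ F, x ∈ B → B ⊆ A → B = A

/-- `A` is an atom of `F`: either the empty set (if it is in `F`) or an atom at some point. -/
def IsAtomOf (F : Finset (Finset α)) (A : Finset α) : Prop :=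
  (A = ∅ ∧ A ∈ F) ∨ ∃ x, IsAtomAt F x A

/-- The surmise function: the collection of atoms of `F` at `x`. -/
def surmise (F : Finset (Finset α)) (x : α) : Finset (Finset α) :=
  F.filter fun A => x ∈ A ∧ ∀ B ∈ F, x ∈ B → B ⊆ A → B = A

/-- `{σ(x) : x ∈ ∪F}` forms a partition of `B \ {∅}`. -/
def SurmisePartition (F B : Finset (Finset α)) : Prop :=
  (∀ x ∈ F.sup id, ∀ y ∈ F.sup id,
      surmise F x = surmise F y ∨ Disjoint (surmise F x) (surmise F y)) ∧
  (F.sup id).sup (surmise F) = B.erase ∅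

/-- The endpoints of `X` in the family `B`: elements of `X` lying in no proper
subset of `X` belonging to `B`. -/
def endpoints (B : Finset (Finset α)) (X : Finset α) : Finset α :=
  X \ (B.filter fun Y => Y ⊂ X).sup id

/-- A family is discriminative if points contained in the same members are equal. -/
def Discriminative (F : Finset (Finset α)) : Prop :=
  ∀ u ∈ F.sup id, ∀ v ∈ F.sup id, (∀ S ∈ F, (u ∈ S ↔ v ∈ S)) → u = v



private lemma symm_of_subset {S T : Finset α} (h : S ⊆ T) : symmDiff S T = T \ S := by
  rw [symmDiff_def]
  simp [Finset.sdiff_eq_empty_iff_subset.mpr h, Finset.sup_eq_union]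

private lemma symm_insert {S : Finset α} {x : α} (hx : x ∉ S) :
    symmDiff S (insert x S) = {x} := by
  rw [symm_of_subset (Finset.subset_insert x S)]
  simp [Finset.insert_sdiff_of_notMem, hx]

private lemma lb : ∀ (p : List (Finset α)) (A Q : Finset α), p.head? = some A →
    p.getLast? = some Q → List.Chain' (fun X Y => (symmDiff X Y).card = 1) p →
    (symmDiff A Q).card + 1 ≤ p.length
  | [], A, Q, h, _, _ => by simp at h
  | [B], A, Q, h1, h2, _ => by
      simp at h1 h2; subst h1; subst h2; simp [symmDiff_self]
  | B :: C :: t, A, Q, h1, h2, hc => by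
      simp at h1; subst h1
      rw [List.getLast?_cons_cons] at h2
      rw [List.Chain', List.isChain_cons_cons] at hc
      have ih := lb (C::t) C Q rfl h2 hc.2
      have tri : symmDiff B Q ⊆ symmDiff B C ∪ symmDiff C Q := symmDiff_triangle B C Q
      have h3 := card_le_card tri
      have h4 := card_union_le (symmDiff B C) (symmDiff C Q)
      have h5 := hc.1
      simp only [List.length_cons] at *
      omega

private lemma step_cases {P A : Finset α} (h : (symmDiff P A).card = 1) :
    ∃ x, (x ∉ P ∧ A = insert x P) ∨ (x ∈ P ∧ A = P.erase x) := by
  obtain ⟨x, hx⟩ := card_eq_one.mp h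
  have hm : ∀ y, y ∈ symmDiff P A ↔ y = x := by rw [hx]; simp
  by_cases hxP : x ∈ P
  · refine ⟨x, Or.inr ⟨hxP, ?_⟩⟩
    ext y
    have h1 := hm y
    simp only [Finset.mem_symmDiff, Finset.mem_erase] at h1 ⊢
    by_cases hy : y = x
    · subst hy; tauto
    · tauto
  · refine ⟨x, Or.inl ⟨hxP, ?_⟩⟩
    ext y
    have h1 := hm y
    simp only [Finset.mem_symmDiff, Finset.mem_insert] at h1 ⊢
    by_cases hy : y = x
    · subst hy; tauto
    · tauto

private lemma mem_union_closed {F : Finset (Finset α)} (hF : UnionClosed F)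
    {T L : Finset α} (hT : T ∈ F) (hL : L ∈ F) : T ∪ L ∈ F := by
  have h := hF {T, L} (by
    intro S hS
    simp only [Finset.mem_insert, Finset.mem_singleton] at hS
    rcases hS with rfl | rfl <;> assumption) ⟨T, by simp⟩
  simpa [Finset.sup_insert, Finset.sup_eq_union] using h

private lemma getLast?_cons_of_getLast? {β : Type*} {l : List β} {a z : β}
    (h : l.getLast? = some z) : (a :: l).getLast? = some z := by
  cases l with
  | nil => simp at h
  | cons b t => rw [List.getLast?_cons_cons]; exact h

private lemma key (F : Finset (Finset α)) (hF : UnionClosed F)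
    (L : Finset α) (hLF : L ∈ F) (K : Finset α) :
    ∀ (p : List (Finset α)) (P : Finset α), P ⊆ K → p.head? = some P →
      p.getLast? = some K → p.length = (K \ P).card + 1 →
      (∀ S ∈ p, S ∈ F) → List.Chain' (fun X Y => (symmDiff X Y).card = 1) p →
      IsTightPath F (P ∪ L) (K ∪ L) ((p.map (· ∪ L)).destutter (· ≠ ·))
  | [], P, _, hh, _, _, _, _ => by simp at hh
  | [Q], P, hPK, hh, hl, hlen, hmem, hch => by
      simp at hh hl
      subst hh; subst hl
      refine ⟨rfl, rfl, by simp [symmDiff_self], ?_, List.isChain_singleton _⟩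
      intro S hS
      simp only [List.map_cons, List.map_nil, List.destutter, List.destutter',
        List.mem_singleton] at hS
      subst hS
      exact mem_union_closed hF (hmem _ (by simp)) hLF
  | P' :: A :: rest, P, hPK, hh, hl, hlen, hmem, hch => by
      have hh' : P' = P := by simpa using hh
      subst hh'
      rw [List.getLast?_cons_cons] at hl
      rw [List.Chain', List.isChain_cons_cons] at hch
      obtain ⟨h1, hch2⟩ := hch
      have hlb := lb (A::rest) A K rfl hl hch2
      have hlen2 : (A::rest).length = (K \ P').card := by
        simp only [List.length_cons] at hlen ⊢; omega
      obtain ⟨x, hx⟩ := step_cases h1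
      have hmain : A = insert x P' ∧ x ∈ K ∧ x ∉ P' := by
        rcases hx with ⟨hxP', rfl⟩ | ⟨hxP', rfl⟩
        · refine ⟨rfl, ?_, hxP'⟩
          by_contra hxK
          have hsd : symmDiff (insert x P') K = insert x (K \ P') := by
            ext y
            simp only [Finset.mem_symmDiff, Finset.mem_insert, Finset.mem_sdiff]
            constructor
            · rintro (⟨(rfl | hyP'), hyK⟩ | ⟨hyK, hy⟩)
              · exact Or.inl rfl
              · exact absurd (hPK hyP') hyK
              · exact Or.inr ⟨hyK, fun h => hy (Or.inr h)⟩
            · rintro (rfl | ⟨hyK, hyP'⟩)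
              · exact Or.inl ⟨Or.inl rfl, hxK⟩
              · exact Or.inr ⟨hyK, fun h => by
                  rcases h with rfl | h
                  · exact hxK hyK
                  · exact hyP' h⟩
          rw [hsd, card_insert_of_notMem (by simp [hxK])] at hlb
          omega
        · exfalso
          have hsub : P'.erase x ⊆ K := (Finset.erase_subset x P').trans hPK
          have hsd : symmDiff (P'.erase x) K = insert x (K \ P') := by
            rw [symm_of_subset hsub]
            ext y
            simp only [Finset.mem_sdiff, Finset.mem_erase, Finset.mem_insert]
            by_cases hy : y = x
            · subst hy
              constructor
              · intro _; exact Or.inl rfl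
              · intro _; exact ⟨hPK hxP', by simp⟩
            · simp [hy]
          rw [hsd, card_insert_of_notMem (by simp [hxP'])] at hlb
          omega
      obtain ⟨hA, hxK, hxP'⟩ := hmain
      have hxKP' : x ∈ K \ P' := Finset.mem_sdiff.mpr ⟨hxK, hxP'⟩
      have hAsub : A ⊆ K := by rw [hA]; exact Finset.insert_subset hxK hPK
      have hKA : K \ A = (K \ P').erase x := by
        rw [hA]; ext y
        simp only [Finset.mem_sdiff, Finset.mem_insert, Finset.mem_erase]
        tauto
      have hcardKA : (K \ A).card = (K \ P').card - 1 := by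
        rw [hKA, card_erase_of_mem hxKP']
      have hKPpos : 1 ≤ (K \ P').card := card_pos.mpr ⟨x, hxKP'⟩
      have hlen3 : (A::rest).length = (K \ A).card + 1 := by omega
      have hmem2 : ∀ S ∈ A :: rest, S ∈ F := fun S hS => hmem S (List.mem_cons_of_mem _ hS)
      have ih := key F hF L hLF K (A::rest) A hAsub rfl hl hlen3 hmem2 hch2
      obtain ⟨ihh, ihl, ihlen, ihmem, ihch⟩ := ih
      by_cases hfeq : P' ∪ L = A ∪ L
      · have heq : ((P'::A::rest).map (· ∪ L)).destutter (· ≠ ·)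
            = (((A::rest)).map (· ∪ L)).destutter (· ≠ ·) := by
          simp only [List.map_cons, List.destutter_cons']
          rw [List.destutter'_cons_neg (h := not_not_intro hfeq), hfeq]
        rw [heq, hfeq]
        exact ⟨ihh, ihl, ihlen, ihmem, ihch⟩
      · have hxL : x ∉ L := fun hxL => hfeq (by
          rw [hA, Finset.insert_union, Finset.insert_eq_self.mpr (Finset.mem_union_right _ hxL)])
        have hxPL : x ∉ P' ∪ L := by simp [hxP', hxL]
        have hAL : A ∪ L = insert x (P' ∪ L) := by rw [hA, Finset.insert_union]
        have heq : ((P'::A::rest).map (· ∪ L)).destutter (· ≠ ·)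
            = (P' ∪ L) :: (((A::rest)).map (· ∪ L)).destutter (· ≠ ·) := by
          simp only [List.map_cons, List.destutter_cons']
          rw [List.destutter'_cons_pos (h := hfeq)]
        rw [heq]
        refine ⟨rfl, getLast?_cons_of_getLast? ihl, ?_, ?_, ?_⟩
        · have e1 : symmDiff (P' ∪ L) (K ∪ L) = (K ∪ L) \ (P' ∪ L) :=
            symm_of_subset (Finset.union_subset_union_left hPK)
          have e2 : symmDiff (A ∪ L) (K ∪ L) = (K ∪ L) \ (A ∪ L) :=
            symm_of_subset (Finset.union_subset_union_left hAsub)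
          have e3 : (K ∪ L) \ (A ∪ L) = ((K ∪ L) \ (P' ∪ L)).erase x := by
            rw [hAL]; ext y
            simp only [Finset.mem_sdiff, Finset.mem_insert, Finset.mem_erase]
            tauto
          have hxmem : x ∈ (K ∪ L) \ (P' ∪ L) :=
            Finset.mem_sdiff.mpr ⟨Finset.mem_union_left _ hxK, hxPL⟩
          have e4 := card_erase_of_mem hxmem
          have hpos : 1 ≤ ((K ∪ L) \ (P' ∪ L)).card := card_pos.mpr ⟨x, hxmem⟩
          rw [e1]
          rw [e2, e3, e4] at ihlen
          simp only [List.length_cons] at ihlen ⊢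
          omega
        · intro S hS
          rcases List.mem_cons.mp hS with rfl | hS
          · exact mem_union_closed hF (hmem _ (by simp)) hLF
          · exact ihmem S hS
        · rw [List.Chain', List.isChain_cons]
          refine ⟨?_, ihch⟩
          intro b hb
          rw [ihh] at hb
          obtain rfl : b = A ∪ L := by have := hb.symm; simpa using this
          rw [hAL, symm_insert hxPL]; simp

/-- Taking a tight path from `∅` to `K`, forming unions with `L ∈ B` and removing
consecutive duplicates yields a tight path from `L` to `K ∪ L`. -/
theorem union_of_tight_path (F B : Finset (Finset α)) (hF : UnionClosed F)
    (hB : IsBase B F) (hempty : (∅ : Finset α) ∈ B)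
    (K L : Finset α) (hL : L ∈ B) (p : List (Finset α))
    (hp : IsTightPath F ∅ K p) :
    IsTightPath F L (K ∪ L) ((p.map (· ∪ L)).destutter (· ≠ ·)) := by
  obtain ⟨hh, hl, hlen, hmem, hch⟩ := hp
  have h := key F hF L (hB.1 hL) K p ∅ (Finset.empty_subset K) hh hl
    (by rw [hlen, Finset.sdiff_empty, ← Finset.bot_eq_empty, bot_symmDiff]) hmem hch
  rwa [Finset.empty_union] at h
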